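/- arXiv:0812.4495 — 2 statements merged into one kernel-verified Lean document; each statement's English description precedes it below -/
import Mathlib

section
/- In the standing setup, for all a∈J, x∈K, r, r'∈R, s, s'∈S the skew pairing τ satisfies: (i) τ(ra, sx) = τ(r_J, x₁) τ(r_R, s) τ(a, x₂), where θ(r) = r_J⊗r_R is the J-coaction on r; (ii) τ(r, ss') = τ(r₍₁₎, s') τ(r₍₂₎, s); (iii) τ(rr', s) = τ(r, 𝒮̄_K(s₍₂₎_K) ⊳ s₍₁₎) τ(r', s₍₂₎_S), where 𝒮̄_K is the pode of K and s₍₂₎_K⊗s₍₂₎_S denotes the K-coaction on s₍₂₎. -/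
open TensorProduct BigOperators

noncomputable section

namespace QB

variable (k : Type) [Field k]

/-- Data of a Hopf algebra structure (with bijective antipode, whose inverse is the
pode) on a `k`-algebra `H`. -/
structure HopfData (H : Type) [Ring H] [Algebra k H] where
  comul : H →ₗ[k] H ⊗[k] H
  counit : H →ₗ[k] k
  antipode : H →ₗ[k] H
  pode : H →ₗ[k] H
  comul_one : comul 1 = 1 ⊗ₜ[k] 1
  comul_mul : ∀ a b : H, comul (a * b) = comul a * comul b
  counit_one : counit 1 = 1
  counit_mul : ∀ a b : H, counit (a * b) = counit a * counit b
  coassoc : ∀ a : H,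
    (TensorProduct.assoc k H H H) ((comul.rTensor H) (comul a)) = (comul.lTensor H) (comul a)
  counit_comul : ∀ a : H, (TensorProduct.lid k H) ((counit.rTensor H) (comul a)) = a
  comul_counit : ∀ a : H, (TensorProduct.rid k H) ((counit.lTensor H) (comul a)) = a
  antipode_conv : ∀ a : H, (LinearMap.mul' k H) ((antipode.rTensor H) (comul a)) = counit a • 1
  conv_antipode : ∀ a : H, (LinearMap.mul' k H) ((antipode.lTensor H) (comul a)) = counit a • 1
  pode_antipode : ∀ a : H, pode (antipode a) = a
  antipode_pode : ∀ a : H, antipode (pode a) = a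

/-- A (left-left) Yetter-Drinfeld module over the Hopf algebra `(H, D)`. -/
structure YDMod (H : Type) [Ring H] [Algebra k H] (D : HopfData k H)
    (V : Type) [AddCommGroup V] [Module k V] where
  act : H →ₗ[k] V →ₗ[k] V
  act_one : ∀ v, act 1 v = v
  act_mul : ∀ (a b : H) (v : V), act (a * b) v = act a (act b v)
  coact : V →ₗ[k] H ⊗[k] V
  coact_counit : ∀ v, (TensorProduct.lid k V) ((D.counit.rTensor V) (coact v)) = v
  coact_coassoc : ∀ v,
    (TensorProduct.assoc k H H V) ((D.comul.rTensor V) (coact v)) = (coact.lTensor H) (coact v)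
  yd_compat : ∀ (a : H) (v : V) (p q : ℕ) (a1 a2 a3 : Fin p → H)
      (vJ : Fin q → H) (vV : Fin q → V),
    (D.comul.rTensor H) (D.comul a) = ∑ i, (a1 i ⊗ₜ[k] a2 i) ⊗ₜ[k] a3 i →
    coact v = ∑ j, vJ j ⊗ₜ[k] vV j →
    coact (act a v) = ∑ i, ∑ j, (a1 i * vJ j * D.antipode (a3 i)) ⊗ₜ[k] act (a2 i) (vV j)

end QB

namespace QB

variable (k : Type) [Field k]

/-- A braided graded Hopf algebra `R` (given as an ordinary `k`-algebra together with a
braided coproduct) in the category of Yetter-Drinfeld modules over `(J, D)`, with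
`R(0) = k`, together with its antipode. -/
structure BGH (J : Type) [Ring J] [Algebra k J] (D : HopfData k J)
    (R : Type) [Ring R] [Algebra k R] extends YDMod k J D R where
  grade : ℕ → Submodule k R
  internal : DirectSum.IsInternal grade
  one_grade : (1 : R) ∈ grade 0
  mul_grade : ∀ {m n : ℕ} {r s : R}, r ∈ grade m → s ∈ grade n → r * s ∈ grade (m + n)
  grade0 : grade 0 = Submodule.span k {(1 : R)}
  comul : R →ₗ[k] R ⊗[k] R
  counit : R →ₗ[k] k
  comul_one : comul 1 = 1 ⊗ₜ[k] 1
  counit_one : counit 1 = 1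
  counit_mul : ∀ r s : R, counit (r * s) = counit r * counit s
  coassoc : ∀ r : R,
    (TensorProduct.assoc k R R R) ((comul.rTensor R) (comul r)) = (comul.lTensor R) (comul r)
  counit_comul : ∀ r : R, (TensorProduct.lid k R) ((counit.rTensor R) (comul r)) = r
  comul_counit : ∀ r : R, (TensorProduct.rid k R) ((counit.lTensor R) (comul r)) = r
  /-- braided multiplicativity of the coproduct -/
  comul_mul : ∀ (r s : R) (p q u : ℕ) (r1 r2 : Fin p → R) (rJ : Fin p → Fin q → J)
      (rV : Fin p → Fin q → R) (s1 s2 : Fin u → R),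
    comul r = ∑ i, r1 i ⊗ₜ[k] r2 i →
    (∀ i, coact (r2 i) = ∑ j, rJ i j ⊗ₜ[k] rV i j) →
    comul s = ∑ t, s1 t ⊗ₜ[k] s2 t →
    comul (r * s) = ∑ i, ∑ j, ∑ t, (r1 i * act (rJ i j) (s1 t)) ⊗ₜ[k] (rV i j * s2 t)
  /-- `R` is a `J`-module algebra -/
  act_mul_alg : ∀ (a : J) (r s : R) (p : ℕ) (a1 a2 : Fin p → J),
    D.comul a = ∑ i, a1 i ⊗ₜ[k] a2 i →
    act a (r * s) = ∑ i, act (a1 i) r * act (a2 i) s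
  act_one_alg : ∀ a : J, act a (1 : R) = D.counit a • (1 : R)
  /-- `R` is a `J`-comodule algebra -/
  coact_mul : ∀ (r s : R) (p q : ℕ) (rJ : Fin p → J) (rV : Fin p → R)
      (sJ : Fin q → J) (sV : Fin q → R),
    coact r = ∑ i, rJ i ⊗ₜ[k] rV i → coact s = ∑ j, sJ j ⊗ₜ[k] sV j →
    coact (r * s) = ∑ i, ∑ j, (rJ i * sJ j) ⊗ₜ[k] (rV i * sV j)
  coact_one : coact 1 = 1 ⊗ₜ[k] 1
  /-- the coproduct is `J`-linear -/
  comul_act : ∀ (a : J) (r : R) (p q : ℕ) (a1 a2 : Fin p → J) (r1 r2 : Fin q → R),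
    D.comul a = ∑ i, a1 i ⊗ₜ[k] a2 i → comul r = ∑ j, r1 j ⊗ₜ[k] r2 j →
    comul (act a r) = ∑ i, ∑ j, act (a1 i) (r1 j) ⊗ₜ[k] act (a2 i) (r2 j)
  counit_act : ∀ (a : J) (r : R), counit (act a r) = D.counit a * counit r
  /-- the coproduct is `J`-colinear -/
  comul_coact : ∀ (r : R) (p q u : ℕ) (r1 r2 : Fin p → R)
      (aJ : Fin p → Fin q → J) (aV : Fin p → Fin q → R)
      (bJ : Fin p → Fin u → J) (bV : Fin p → Fin u → R)
      (w : ℕ) (rJ : Fin w → J) (rV : Fin w → R),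
    comul r = ∑ i, r1 i ⊗ₜ[k] r2 i →
    (∀ i, coact (r1 i) = ∑ j, aJ i j ⊗ₜ[k] aV i j) →
    (∀ i, coact (r2 i) = ∑ t, bJ i t ⊗ₜ[k] bV i t) →
    coact r = ∑ j, rJ j ⊗ₜ[k] rV j →
    ∑ i, ∑ j, ∑ t, (aJ i j * bJ i t) ⊗ₜ[k] (aV i j ⊗ₜ[k] bV i t)
      = ∑ j, rJ j ⊗ₜ[k] comul (rV j)
  /-- the counit is `J`-colinear -/
  counit_coact : ∀ (r : R) (w : ℕ) (rJ : Fin w → J) (rV : Fin w → R),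
    coact r = ∑ j, rJ j ⊗ₜ[k] rV j → ∑ j, counit (rV j) • rJ j = counit r • (1 : J)
  /-- the action preserves the grading -/
  act_grade : ∀ (a : J) {n : ℕ} {r : R}, r ∈ grade n → act a r ∈ grade n
  /-- the coaction preserves the grading -/
  coact_grade : ∀ {n : ℕ} (r : R), r ∈ grade n → ∃ (p : ℕ) (rJ : Fin p → J) (rV : Fin p → R),
    (∀ i, rV i ∈ grade n) ∧ coact r = ∑ i, rJ i ⊗ₜ[k] rV i
  /-- the coproduct preserves the grading -/
  comul_grade : ∀ {n : ℕ} (r : R), r ∈ grade n → ∃ (p : ℕ) (d e : Fin p → ℕ) (x y : Fin p → R),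
    (∀ i, d i + e i = n ∧ x i ∈ grade (d i) ∧ y i ∈ grade (e i)) ∧
      comul r = ∑ i, x i ⊗ₜ[k] y i
  /-- the (braided) antipode of `R` -/
  antipodeR : R →ₗ[k] R
  antipodeR_conv : ∀ (r : R) (p : ℕ) (r1 r2 : Fin p → R), comul r = ∑ i, r1 i ⊗ₜ[k] r2 i →
    ∑ i, antipodeR (r1 i) * r2 i = counit r • 1
  conv_antipodeR : ∀ (r : R) (p : ℕ) (r1 r2 : Fin p → R), comul r = ∑ i, r1 i ⊗ₜ[k] r2 i →
    ∑ i, r1 i * antipodeR (r2 i) = counit r • 1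

variable {J : Type} [Ring J] [Algebra k J] {R : Type} [Ring R] [Algebra k R]

/-- `R` is a pre-Nichols algebra of `V = R(1)` iff it is generated by its degree-one part. -/
def BGH.IsPreNichols {D : HopfData k J} (B : BGH k J D R) : Prop :=
  Algebra.adjoin k (B.grade 1 : Set R) = ⊤

/-- The set of primitive elements of the braided Hopf algebra `R`. -/
def BGH.primitives {D : HopfData k J} (B : BGH k J D R) : Set R :=
  {r : R | B.comul r = r ⊗ₜ[k] 1 + 1 ⊗ₜ[k] r}

/-- `R` is the Nichols algebra of `V = R(1)` iff it is pre-Nichols and its degree-one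
part coincides with the space of primitives. -/
def BGH.IsNichols {D : HopfData k J} (B : BGH k J D R) : Prop :=
  B.IsPreNichols k ∧ (B.grade 1 : Set R) = B.primitives k

end QB

namespace QB

variable (k : Type) [Field k]
variable {J : Type} [Ring J] [Algebra k J] {R : Type} [Ring R] [Algebra k R]

/-- The bosonization `𝒜 = R ⋊ J` : the (uniquely determined) ordinary Hopf algebra
structure on the vector space `R ⊗ J`, given as data subject to the defining formulas
for the product and coproduct, together with its antipode and pode. -/
structure Boson (D : HopfData k J) (B : BGH k J D R) where
  Amul : (R ⊗[k] J) →ₗ[k] (R ⊗[k] J) →ₗ[k] (R ⊗[k] J)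
  Amul_assoc : ∀ x y z, Amul (Amul x y) z = Amul x (Amul y z)
  Amul_one : ∀ x, Amul x ((1 : R) ⊗ₜ[k] (1 : J)) = x
  one_Amul : ∀ x, Amul ((1 : R) ⊗ₜ[k] (1 : J)) x = x
  Amul_def : ∀ (r s : R) (a b : J) (p : ℕ) (a1 a2 : Fin p → J),
    D.comul a = ∑ i, a1 i ⊗ₜ[k] a2 i →
    Amul (r ⊗ₜ[k] a) (s ⊗ₜ[k] b) = ∑ i, (r * B.act (a1 i) s) ⊗ₜ[k] (a2 i * b)
  Acomul : (R ⊗[k] J) →ₗ[k] (R ⊗[k] J) ⊗[k] (R ⊗[k] J)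
  Acomul_def : ∀ (r : R) (a : J) (p q u : ℕ) (r1 r2 : Fin p → R)
      (rJ : Fin p → Fin q → J) (rV : Fin p → Fin q → R) (aa1 aa2 : Fin u → J),
    B.comul r = ∑ i, r1 i ⊗ₜ[k] r2 i →
    (∀ i, B.coact (r2 i) = ∑ j, rJ i j ⊗ₜ[k] rV i j) →
    D.comul a = ∑ t, aa1 t ⊗ₜ[k] aa2 t →
    Acomul (r ⊗ₜ[k] a)
      = ∑ i, ∑ j, ∑ t, (r1 i ⊗ₜ[k] (rJ i j * aa1 t)) ⊗ₜ[k] (rV i j ⊗ₜ[k] aa2 t)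
  Acounit : (R ⊗[k] J) →ₗ[k] k
  Acounit_def : ∀ (r : R) (a : J), Acounit (r ⊗ₜ[k] a) = B.counit r * D.counit a
  Acoassoc : ∀ x, (TensorProduct.assoc k (R ⊗[k] J) (R ⊗[k] J) (R ⊗[k] J))
      ((Acomul.rTensor (R ⊗[k] J)) (Acomul x)) = (Acomul.lTensor (R ⊗[k] J)) (Acomul x)
  Acounit_comul : ∀ x, (TensorProduct.lid k (R ⊗[k] J)) ((Acounit.rTensor (R ⊗[k] J)) (Acomul x)) = x
  Acomul_counit : ∀ x, (TensorProduct.rid k (R ⊗[k] J)) ((Acounit.lTensor (R ⊗[k] J)) (Acomul x)) = x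
  Santipode : (R ⊗[k] J) →ₗ[k] (R ⊗[k] J)
  Spode : (R ⊗[k] J) →ₗ[k] (R ⊗[k] J)
  antipode_conv : ∀ (x : R ⊗[k] J) (p : ℕ) (x1 x2 : Fin p → R ⊗[k] J),
    Acomul x = ∑ i, x1 i ⊗ₜ[k] x2 i →
    ∑ i, Amul (Santipode (x1 i)) (x2 i) = Acounit x • ((1 : R) ⊗ₜ[k] (1 : J))
  conv_antipode : ∀ (x : R ⊗[k] J) (p : ℕ) (x1 x2 : Fin p → R ⊗[k] J),
    Acomul x = ∑ i, x1 i ⊗ₜ[k] x2 i →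
    ∑ i, Amul (x1 i) (Santipode (x2 i)) = Acounit x • ((1 : R) ⊗ₜ[k] (1 : J))
  pode_antipode : ∀ x, Spode (Santipode x) = x
  antipode_pode : ∀ x, Santipode (Spode x) = x

variable {K S : Type} [Ring K] [Algebra k K] [Ring S] [Algebra k S]

/-- the embedding `R → R ⊗ J`, `r ↦ r ⊗ 1` -/
def incl₁ : R →ₗ[k] R ⊗[k] J := (TensorProduct.mk k R J).flip 1

/-- the embedding `J → R ⊗ J`, `a ↦ 1 ⊗ a` -/
def incl₂ : J →ₗ[k] R ⊗[k] J := TensorProduct.mk k R J 1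

/-- the projection `π : 𝒜 → J` induced by `ε ⊗ id` -/
def proj₂ (B : BGH k J D R) : (R ⊗[k] J) →ₗ[k] J :=
  (TensorProduct.lid k J).toLinearMap ∘ₗ (B.counit.rTensor J)

end QB

namespace QB

variable (k : Type) [Field k]
variable {J : Type} [Ring J] [Algebra k J] {R : Type} [Ring R] [Algebra k R]
variable {K S : Type} [Ring K] [Algebra k K] [Ring S] [Algebra k S]

/-- The standing setup of the paper: Hopf algebras `J`, `K` with bijective antipode,
pre-Nichols algebras `R`, `S` of `V = R(1)`, `W = S(1)` in the Yetter-Drinfeld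
categories over `J`, `K`, their bosonizations `𝒜 = R ⋊ J`, `ℋ = S ⋊ K`, a skew pairing
`τ₀ : J ⊗ K → k` and the (unique) skew pairing `τ : 𝒜 ⊗ ℋ → k` extending `τ₀` with
`τ(J, W) = 0 = τ(V, K)`. -/
structure Setup (J K R S : Type) [Ring J] [Algebra k J] [Ring K] [Algebra k K]
    [Ring R] [Algebra k R] [Ring S] [Algebra k S] where
  DJ : HopfData k J
  DK : HopfData k K
  RB : BGH k J DJ R
  SB : BGH k K DK S
  RB_pre : RB.IsPreNichols k
  SB_pre : SB.IsPreNichols k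
  A : Boson k DJ RB
  H : Boson k DK SB
  τ₀ : J →ₗ[k] K →ₗ[k] k
  τ₀_mul_left : ∀ (a b : J) (x : K) (p : ℕ) (x1 x2 : Fin p → K),
    DK.comul x = ∑ i, x1 i ⊗ₜ[k] x2 i →
    τ₀ (a * b) x = ∑ i, τ₀ a (x1 i) * τ₀ b (x2 i)
  τ₀_mul_right : ∀ (a : J) (x y : K) (p : ℕ) (a1 a2 : Fin p → J),
    DJ.comul a = ∑ i, a1 i ⊗ₜ[k] a2 i →
    τ₀ a (x * y) = ∑ i, τ₀ (a1 i) y * τ₀ (a2 i) x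
  τ₀_one_left : ∀ x : K, τ₀ 1 x = DK.counit x
  τ₀_one_right : ∀ a : J, τ₀ a 1 = DJ.counit a
  τ : (R ⊗[k] J) →ₗ[k] (S ⊗[k] K) →ₗ[k] k
  τ_mul_left : ∀ (x y : R ⊗[k] J) (z : S ⊗[k] K) (p : ℕ) (z1 z2 : Fin p → S ⊗[k] K),
    H.Acomul z = ∑ i, z1 i ⊗ₜ[k] z2 i →
    τ (A.Amul x y) z = ∑ i, τ x (z1 i) * τ y (z2 i)
  τ_mul_right : ∀ (x : R ⊗[k] J) (y z : S ⊗[k] K) (p : ℕ) (x1 x2 : Fin p → R ⊗[k] J),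
    A.Acomul x = ∑ i, x1 i ⊗ₜ[k] x2 i →
    τ x (H.Amul y z) = ∑ i, τ (x1 i) z * τ (x2 i) y
  τ_one_left : ∀ z : S ⊗[k] K, τ ((1 : R) ⊗ₜ[k] (1 : J)) z = H.Acounit z
  τ_one_right : ∀ x : R ⊗[k] J, τ x ((1 : S) ⊗ₜ[k] (1 : K)) = A.Acounit x
  τ_ext : ∀ (a : J) (x : K), τ ((1 : R) ⊗ₜ[k] a) ((1 : S) ⊗ₜ[k] x) = τ₀ a x
  τ_JW : ∀ (a : J) (w : S), w ∈ SB.grade 1 → τ ((1 : R) ⊗ₜ[k] a) (w ⊗ₜ[k] (1 : K)) = 0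
  τ_VK : ∀ (v : R) (x : K), v ∈ RB.grade 1 → τ (v ⊗ₜ[k] (1 : J)) ((1 : S) ⊗ₜ[k] x) = 0

variable {k}

/-- The restriction `τ_{RS} : R ⊗ S → k` of `τ`, as a bilinear form. -/
def Setup.tauRS (St : Setup k J K R S) : R →ₗ[k] S →ₗ[k] k :=
  LinearMap.compl₂ (St.τ ∘ₗ incl₁ k) (incl₁ k)

/-- The action `s ▷ r = τ(r₍₁₎, s) r₍₂₎` of `S` on `R` (formula (3.4)). -/
def Setup.sAct (St : Setup k J K R S) (s : S) : R →ₗ[k] R :=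
  (TensorProduct.lid k R).toLinearMap ∘ₗ
    (LinearMap.rTensor R (St.tauRS.flip s)) ∘ₗ St.RB.comul

/-- The generalized `q`-boson algebra `ℬ`: the (uniquely determined) deformed algebra
structure on `R ⊗ S`, given as data subject to the defining relations (3.2), (3.3). -/
structure QBosonAlg (St : Setup k J K R S) where
  Bmul : (R ⊗[k] S) →ₗ[k] (R ⊗[k] S) →ₗ[k] (R ⊗[k] S)
  Bmul_assoc : ∀ x y z, Bmul (Bmul x y) z = Bmul x (Bmul y z)
  Bmul_one : ∀ x, Bmul x ((1 : R) ⊗ₜ[k] (1 : S)) = x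
  one_Bmul : ∀ x, Bmul ((1 : R) ⊗ₜ[k] (1 : S)) x = x
  mul_rr : ∀ r r' : R, Bmul (r ⊗ₜ[k] (1 : S)) (r' ⊗ₜ[k] (1 : S)) = (r * r') ⊗ₜ[k] (1 : S)
  mul_ss : ∀ s s' : S, Bmul ((1 : R) ⊗ₜ[k] s) ((1 : R) ⊗ₜ[k] s') = (1 : R) ⊗ₜ[k] (s * s')
  mul_rs : ∀ (r : R) (s : S), Bmul (r ⊗ₜ[k] (1 : S)) ((1 : R) ⊗ₜ[k] s) = r ⊗ₜ[k] s
  mul_wv : ∀ (v : R) (w : S), v ∈ St.RB.grade 1 → w ∈ St.SB.grade 1 →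
    ∀ (p q : ℕ) (vJ : Fin p → J) (vV : Fin p → R) (wK : Fin q → K) (wW : Fin q → S),
    St.RB.coact v = ∑ i, vJ i ⊗ₜ[k] vV i →
    St.SB.coact w = ∑ j, wK j ⊗ₜ[k] wW j →
    Bmul ((1 : R) ⊗ₜ[k] w) (v ⊗ₜ[k] (1 : S))
      = (∑ i, ∑ j, St.τ₀ (vJ i) (wK j) • (vV i ⊗ₜ[k] wW j))
        + St.τ (v ⊗ₜ[k] (1 : J)) (w ⊗ₜ[k] (1 : K)) • ((1 : R) ⊗ₜ[k] (1 : S))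

/-- Non-degeneracy of a bilinear form. -/
def Nondeg {M N : Type} [AddCommGroup M] [Module k M] [AddCommGroup N] [Module k N]
    (φ : M →ₗ[k] N →ₗ[k] k) : Prop :=
  (∀ m : M, (∀ n : N, φ m n = 0) → m = 0) ∧ (∀ n : N, (∀ m : M, φ m n = 0) → n = 0)

end QB

namespace QB

variable {k : Type} [Field k]
variable {J : Type} [Ring J] [Algebra k J] {R : Type} [Ring R] [Algebra k R]
variable {K S : Type} [Ring K] [Algebra k K] [Ring S] [Algebra k S]

section Helpers

variable {M N : Type} [AddCommGroup M] [Module k M] [AddCommGroup N] [Module k N]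

lemma exists_rep (t : M ⊗[k] N) :
    ∃ (p : ℕ) (m : Fin p → M) (n : Fin p → N), t = ∑ i, m i ⊗ₜ[k] n i := by
  induction t using TensorProduct.induction_on with
  | zero => exact ⟨0, ![], ![], by simp⟩
  | tmul a b => exact ⟨1, fun _ => a, fun _ => b, by simp⟩
  | add x y hx hy =>
    obtain ⟨p, m, n, rfl⟩ := hx
    obtain ⟨q, m', n', rfl⟩ := hy
    exact ⟨p + q, Fin.append m m', Fin.append n n', by
      rw [Fin.sum_univ_add]
      simp [Fin.append_left, Fin.append_right]⟩

lemma exists_rep_fam {ι : Type} [Fintype ι] (f : ι → M ⊗[k] N) :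
    ∃ (q : ℕ) (m : ι → Fin q → M) (n : ι → Fin q → N),
      ∀ i, f i = ∑ j, m i j ⊗ₜ[k] n i j := by
  classical
  choose p m n h using fun i => exists_rep (f i)
  refine ⟨Finset.univ.sup p,
    (fun i j => if hj : (j : ℕ) < p i then m i ⟨j, hj⟩ else 0),
    (fun i j => if hj : (j : ℕ) < p i then n i ⟨j, hj⟩ else 0), fun i => ?_⟩
  have hle : p i ≤ Finset.univ.sup p := Finset.le_sup (Finset.mem_univ i)
  set g : ℕ → M ⊗[k] N :=
    fun j => if hj : j < p i then m i ⟨j, hj⟩ ⊗ₜ[k] n i ⟨j, hj⟩ else 0 with hg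
  have h1 : f i = ∑ j ∈ Finset.range (p i), g j := by
    rw [h i, ← Fin.sum_univ_eq_sum_range]
    refine Finset.sum_congr rfl fun j _ => ?_
    simp [hg, j.isLt]
  have h2 : ∑ j : Fin (Finset.univ.sup p),
      (if hj : (j : ℕ) < p i then m i ⟨j, hj⟩ else 0) ⊗ₜ[k]
        (if hj : (j : ℕ) < p i then n i ⟨j, hj⟩ else 0)
      = ∑ j ∈ Finset.range (Finset.univ.sup p), g j := by
    rw [← Fin.sum_univ_eq_sum_range]
    refine Finset.sum_congr rfl fun j _ => ?_
    by_cases hj : (j : ℕ) < p i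
    · simp [hg, hj]
    · rw [dif_neg hj, dif_neg hj, zero_tmul, hg]
      simp [hj]
  rw [h1, h2]
  exact Finset.sum_subset (Finset.range_subset_range.2 hle) (by
    intro j _ hj
    simp only [Finset.mem_range, not_lt] at hj
    simp [hg, Nat.not_lt.2 hj])

end Helpers

section Pres

lemma HopfData.rep_counit_left (D : HopfData k J) {a : J} {p : ℕ} {a1 a2 : Fin p → J}
    (h : D.comul a = ∑ i, a1 i ⊗ₜ[k] a2 i) : ∑ i, D.counit (a1 i) • a2 i = a := by
  have h0 := D.counit_comul a
  rw [h] at h0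
  simpa using h0

lemma HopfData.rep_counit_right (D : HopfData k J) {a : J} {p : ℕ} {a1 a2 : Fin p → J}
    (h : D.comul a = ∑ i, a1 i ⊗ₜ[k] a2 i) : ∑ i, D.counit (a2 i) • a1 i = a := by
  have h0 := D.comul_counit a
  rw [h] at h0
  simpa using h0

lemma BGH.rep_counit_left {D : HopfData k J} (B : BGH k J D R) {r : R} {p : ℕ}
    {r1 r2 : Fin p → R} (h : B.comul r = ∑ i, r1 i ⊗ₜ[k] r2 i) :
    ∑ i, B.counit (r1 i) • r2 i = r := by
  have h0 := B.counit_comul r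
  rw [h] at h0
  simpa using h0

lemma BGH.rep_counit_right {D : HopfData k J} (B : BGH k J D R) {r : R} {p : ℕ}
    {r1 r2 : Fin p → R} (h : B.comul r = ∑ i, r1 i ⊗ₜ[k] r2 i) :
    ∑ i, B.counit (r2 i) • r1 i = r := by
  have h0 := B.comul_counit r
  rw [h] at h0
  simpa using h0

lemma BGH.rep_coact_counit {D : HopfData k J} (B : BGH k J D R) {r : R} {p : ℕ}
    {rJ : Fin p → J} {rV : Fin p → R} (h : B.coact r = ∑ i, rJ i ⊗ₜ[k] rV i) :
    ∑ i, D.counit (rJ i) • rV i = r := by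
  have h0 := B.coact_counit r
  rw [h] at h0
  simpa using h0

lemma BGH.counit_grade_one {D : HopfData k J} (B : BGH k J D R) {r : R}
    (hr : r ∈ B.grade 1) : B.counit r = 0 := by
  classical
  obtain ⟨p, d, e, x, y, hmem, hcom⟩ := B.comul_grade r hr
  have hdisj : Disjoint (B.grade 0) (B.grade 1) :=
    B.internal.submodule_iSupIndep.pairwiseDisjoint (show (0:ℕ) ≠ 1 by norm_num)
  have hr1 : ∑ i, B.counit (x i) • y i = r := B.rep_counit_left hcom
  have hr2 : ∑ i, B.counit (y i) • x i = r := B.rep_counit_right hcom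
  set s0 : Finset (Fin p) := Finset.univ.filter (fun i => d i = 0) with hs0
  have hd0 : ∀ i ∈ s0, d i = 0 ∧ e i = 1 := by
    intro i hi
    have h1 := (hmem i).1
    simp only [hs0, Finset.mem_filter] at hi
    omega
  have hd1 : ∀ i ∈ s0ᶜ, d i = 1 ∧ e i = 0 := by
    intro i hi
    have h1 := (hmem i).1
    simp only [hs0, Finset.mem_compl, Finset.mem_filter, Finset.mem_univ, true_and] at hi
    omega
  have hA : ∑ i ∈ s0, B.counit (y i) • x i = 0 := by
    refine Submodule.disjoint_def.mp hdisj _ ?_ ?_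
    · exact Submodule.sum_mem _ fun i hi => Submodule.smul_mem _ _
        (by have := (hmem i).2.1; rwa [(hd0 i hi).1] at this)
    · have heq : ∑ i ∈ s0, B.counit (y i) • x i
          = r - ∑ i ∈ s0ᶜ, B.counit (y i) • x i :=
        eq_sub_of_add_eq (by rw [Finset.sum_add_sum_compl, hr2])
      rw [heq]
      exact Submodule.sub_mem _ hr (Submodule.sum_mem _ fun i hi =>
        Submodule.smul_mem _ _
          (by have := (hmem i).2.1; rwa [(hd1 i hi).1] at this))
  have hB : ∑ i ∈ s0ᶜ, B.counit (x i) • y i = 0 := by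
    refine Submodule.disjoint_def.mp hdisj _ ?_ ?_
    · exact Submodule.sum_mem _ fun i hi => Submodule.smul_mem _ _
        (by have := (hmem i).2.2; rwa [(hd1 i hi).2] at this)
    · have heq : ∑ i ∈ s0ᶜ, B.counit (x i) • y i
          = r - ∑ i ∈ s0, B.counit (x i) • y i := by
        refine eq_sub_of_add_eq ?_
        rw [add_comm, Finset.sum_add_sum_compl, hr1]
      rw [heq]
      exact Submodule.sub_mem _ hr (Submodule.sum_mem _ fun i hi =>
        Submodule.smul_mem _ _
          (by have := (hmem i).2.2; rwa [(hd0 i hi).2] at this))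
  have hcount : B.counit r = ∑ i, B.counit (x i) * B.counit (y i) := by
    rw [← hr1]
    simp [smul_eq_mul]
  rw [hcount, ← Finset.sum_add_sum_compl s0 (fun i => B.counit (x i) * B.counit (y i))]
  have e1 : ∑ i ∈ s0, B.counit (x i) * B.counit (y i) = 0 := by
    have h0 := congrArg B.counit hA
    simp only [map_sum, map_smul, smul_eq_mul, map_zero] at h0
    rw [← h0]
    exact Finset.sum_congr rfl fun i _ => mul_comm _ _
  have e2 : ∑ i ∈ s0ᶜ, B.counit (x i) * B.counit (y i) = 0 := by
    have h0 := congrArg B.counit hB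
    simpa only [map_sum, map_smul, smul_eq_mul, map_zero] using h0
  rw [e1, e2, add_zero]

end Pres


section Boso

variable {D : HopfData k J} {B : BGH k J D R}

lemma Boson.mul_left_one (A : Boson k D B) (r s : R) (b : J) :
    A.Amul (r ⊗ₜ[k] (1:J)) (s ⊗ₜ[k] b) = (r * s) ⊗ₜ[k] b := by
  have h1 : D.comul 1 = ∑ _i : Fin 1, (1:J) ⊗ₜ[k] (1:J) := by simp [D.comul_one]
  have h2 := A.Amul_def r s 1 b 1 (fun _ => 1) (fun _ => 1) h1
  simpa [B.act_one] using h2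

lemma Boson.mul_one_left (A : Boson k D B) (a : J) (s : R) (b : J) (p : ℕ)
    (a1 a2 : Fin p → J) (h : D.comul a = ∑ i, a1 i ⊗ₜ[k] a2 i) :
    A.Amul ((1:R) ⊗ₜ[k] a) (s ⊗ₜ[k] b) = ∑ i, B.act (a1 i) s ⊗ₜ[k] (a2 i * b) := by
  simpa using A.Amul_def 1 s a b p a1 a2 h

lemma Boson.comul_incl₂ (A : Boson k D B) (a : J) (p : ℕ) (a1 a2 : Fin p → J)
    (h : D.comul a = ∑ i, a1 i ⊗ₜ[k] a2 i) :
    A.Acomul ((1:R) ⊗ₜ[k] a)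
      = ∑ i, ((1:R) ⊗ₜ[k] a1 i) ⊗ₜ[k] ((1:R) ⊗ₜ[k] a2 i) := by
  have h1 : B.comul 1 = ∑ _i : Fin 1, (1:R) ⊗ₜ[k] (1:R) := by simp [B.comul_one]
  have h2 : ∀ _i : Fin 1, B.coact (1:R) = ∑ _j : Fin 1, (1:J) ⊗ₜ[k] (1:R) := by
    intro _; simp [B.coact_one]
  simpa using A.Acomul_def 1 a 1 1 p (fun _ => 1) (fun _ => 1) (fun _ _ => 1)
    (fun _ _ => 1) a1 a2 h1 h2 h

lemma Boson.comul_incl₁ (A : Boson k D B) (r : R) (p q : ℕ) (r1 r2 : Fin p → R)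
    (rJ : Fin p → Fin q → J) (rV : Fin p → Fin q → R)
    (h1 : B.comul r = ∑ i, r1 i ⊗ₜ[k] r2 i)
    (h2 : ∀ i, B.coact (r2 i) = ∑ j, rJ i j ⊗ₜ[k] rV i j) :
    A.Acomul (r ⊗ₜ[k] (1:J))
      = ∑ i, ∑ j, (r1 i ⊗ₜ[k] rJ i j) ⊗ₜ[k] (rV i j ⊗ₜ[k] (1:J)) := by
  have h3 : D.comul 1 = ∑ _t : Fin 1, (1:J) ⊗ₜ[k] (1:J) := by simp [D.comul_one]
  simpa using A.Acomul_def r 1 p q 1 r1 r2 rJ rV (fun _ => 1) (fun _ => 1) h1 h2 h3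

end Boso

section TauWrap

lemma Setup.tauRS_apply (St : Setup k J K R S) (r : R) (s : S) :
    St.tauRS r s = St.τ (r ⊗ₜ[k] (1:J)) (s ⊗ₜ[k] (1:K)) := by
  simp [Setup.tauRS, incl₁]

lemma Setup.tau_mul_left' (St : Setup k J K R S) {ι : Type} [Fintype ι]
    (x y : R ⊗[k] J) (z : S ⊗[k] K) (z1 z2 : ι → S ⊗[k] K)
    (h : St.H.Acomul z = ∑ i, z1 i ⊗ₜ[k] z2 i) :
    St.τ (St.A.Amul x y) z = ∑ i, St.τ x (z1 i) * St.τ y (z2 i) := by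
  classical
  let e := Fintype.equivFin ι
  have h' : St.H.Acomul z
      = ∑ j : Fin (Fintype.card ι), z1 (e.symm j) ⊗ₜ[k] z2 (e.symm j) := by
    rw [h, ← Equiv.sum_comp e.symm (fun i => z1 i ⊗ₜ[k] z2 i)]
  rw [St.τ_mul_left x y z _ _ _ h']
  exact Equiv.sum_comp e.symm (fun i => St.τ x (z1 i) * St.τ y (z2 i))

lemma Setup.tau_mul_right' (St : Setup k J K R S) {ι : Type} [Fintype ι]
    (x : R ⊗[k] J) (y z : S ⊗[k] K) (x1 x2 : ι → R ⊗[k] J)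
    (h : St.A.Acomul x = ∑ i, x1 i ⊗ₜ[k] x2 i) :
    St.τ x (St.H.Amul y z) = ∑ i, St.τ (x1 i) z * St.τ (x2 i) y := by
  classical
  let e := Fintype.equivFin ι
  have h' : St.A.Acomul x
      = ∑ j : Fin (Fintype.card ι), x1 (e.symm j) ⊗ₜ[k] x2 (e.symm j) := by
    rw [h, ← Equiv.sum_comp e.symm (fun i => x1 i ⊗ₜ[k] x2 i)]
  rw [St.τ_mul_right x y z _ _ _ h']
  exact Equiv.sum_comp e.symm (fun i => St.τ (x1 i) z * St.τ (x2 i) y)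

lemma Setup.tau_mul_left₂ (St : Setup k J K R S) {a b : ℕ}
    (x y : R ⊗[k] J) (z : S ⊗[k] K) (z1 z2 : Fin a → Fin b → S ⊗[k] K)
    (h : St.H.Acomul z = ∑ i, ∑ j, z1 i j ⊗ₜ[k] z2 i j) :
    St.τ (St.A.Amul x y) z = ∑ i, ∑ j, St.τ x (z1 i j) * St.τ y (z2 i j) := by
  have h' : St.H.Acomul z = ∑ p : Fin a × Fin b, z1 p.1 p.2 ⊗ₜ[k] z2 p.1 p.2 := by
    rw [h, Fintype.sum_prod_type]
  have h2 := St.tau_mul_left' x y z _ _ h'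
  rwa [Fintype.sum_prod_type] at h2

lemma Setup.tau_mul_right₂ (St : Setup k J K R S) {a b : ℕ}
    (x : R ⊗[k] J) (y z : S ⊗[k] K) (x1 x2 : Fin a → Fin b → R ⊗[k] J)
    (h : St.A.Acomul x = ∑ i, ∑ j, x1 i j ⊗ₜ[k] x2 i j) :
    St.τ x (St.H.Amul y z) = ∑ i, ∑ j, St.τ (x1 i j) z * St.τ (x2 i j) y := by
  have h' : St.A.Acomul x = ∑ p : Fin a × Fin b, x1 p.1 p.2 ⊗ₜ[k] x2 p.1 p.2 := by
    rw [h, Fintype.sum_prod_type]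
  have h2 := St.tau_mul_right' x y z _ _ h'
  rwa [Fintype.sum_prod_type] at h2

lemma Setup.tau_mul_left₃ (St : Setup k J K R S) {a b c : ℕ}
    (x y : R ⊗[k] J) (z : S ⊗[k] K) (z1 z2 : Fin a → Fin b → Fin c → S ⊗[k] K)
    (h : St.H.Acomul z = ∑ i, ∑ j, ∑ t, z1 i j t ⊗ₜ[k] z2 i j t) :
    St.τ (St.A.Amul x y) z
      = ∑ i, ∑ j, ∑ t, St.τ x (z1 i j t) * St.τ y (z2 i j t) := by
  have h' : St.H.Acomul z
      = ∑ p : Fin a × Fin b × Fin c, z1 p.1 p.2.1 p.2.2 ⊗ₜ[k] z2 p.1 p.2.1 p.2.2 := by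
    rw [h, Fintype.sum_prod_type]
    exact Finset.sum_congr rfl fun i _ => by rw [Fintype.sum_prod_type]
  have h2 := St.tau_mul_left' x y z _ _ h'
  rw [Fintype.sum_prod_type] at h2
  rw [h2]
  exact Finset.sum_congr rfl fun i _ => by rw [Fintype.sum_prod_type]

end TauWrap


section Core

lemma Setup.tau_R_K (St : Setup k J K R S) (r : R) :
    ∀ x : K, St.τ (r ⊗ₜ[k] (1:J)) ((1:S) ⊗ₜ[k] x)
      = St.RB.counit r * St.DK.counit x := by
  have hr : r ∈ Algebra.adjoin k (St.RB.grade 1 : Set R) := by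
    rw [St.RB_pre]; exact Algebra.mem_top
  refine Algebra.adjoin_induction ?_ ?_ ?_ ?_ hr
  · intro v hv x
    rw [St.τ_VK v x hv, St.RB.counit_grade_one hv, zero_mul]
  · intro c x
    have h1 : (algebraMap k R c) ⊗ₜ[k] (1:J) = c • ((1:R) ⊗ₜ[k] (1:J)) := by
      rw [Algebra.algebraMap_eq_smul_one, smul_tmul']
    have h2 : St.RB.counit (algebraMap k R c) = c := by
      rw [Algebra.algebraMap_eq_smul_one, map_smul, St.RB.counit_one, smul_eq_mul, mul_one]
    rw [h1, map_smul, LinearMap.smul_apply, St.τ_one_left, St.H.Acounit_def,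
      St.SB.counit_one, one_mul, h2, smul_eq_mul]
  · intro a b _ _ ha hb x
    rw [add_tmul, map_add, LinearMap.add_apply, ha, hb, map_add, add_mul]
  · intro a b _ _ ha hb x
    obtain ⟨q, x1, x2, hx⟩ := exists_rep (St.DK.comul x)
    have hAc := St.H.comul_incl₂ x q x1 x2 hx
    rw [← St.A.mul_left_one a b 1, St.tau_mul_left' _ _ _ _ _ hAc]
    have hsum : ∑ j, St.DK.counit (x1 j) * St.DK.counit (x2 j) = St.DK.counit x := by
      have h3 := congrArg St.DK.counit (St.DK.rep_counit_left hx)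
      simpa [smul_eq_mul] using h3
    calc ∑ j, St.τ (a ⊗ₜ[k] (1:J)) ((1:S) ⊗ₜ[k] x1 j)
          * St.τ (b ⊗ₜ[k] (1:J)) ((1:S) ⊗ₜ[k] x2 j)
        = ∑ j, (St.RB.counit a * St.RB.counit b)
            * (St.DK.counit (x1 j) * St.DK.counit (x2 j)) := by
          refine Finset.sum_congr rfl fun j _ => ?_
          rw [ha, hb]; ring
      _ = St.RB.counit (a * b) * St.DK.counit x := by
          rw [← Finset.mul_sum, hsum, St.RB.counit_mul]

lemma Setup.tau_J_S (St : Setup k J K R S) (s : S) :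
    ∀ a : J, St.τ ((1:R) ⊗ₜ[k] a) (s ⊗ₜ[k] (1:K))
      = St.DJ.counit a * St.SB.counit s := by
  have hs : s ∈ Algebra.adjoin k (St.SB.grade 1 : Set S) := by
    rw [St.SB_pre]; exact Algebra.mem_top
  refine Algebra.adjoin_induction ?_ ?_ ?_ ?_ hs
  · intro w hw a
    rw [St.τ_JW a w hw, St.SB.counit_grade_one hw, mul_zero]
  · intro c a
    have h1 : (algebraMap k S c) ⊗ₜ[k] (1:K) = c • ((1:S) ⊗ₜ[k] (1:K)) := by
      rw [Algebra.algebraMap_eq_smul_one, smul_tmul']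
    have h2 : St.SB.counit (algebraMap k S c) = c := by
      rw [Algebra.algebraMap_eq_smul_one, map_smul, St.SB.counit_one, smul_eq_mul, mul_one]
    rw [h1, map_smul, St.τ_ext, St.τ₀_one_right, h2, smul_eq_mul, mul_comm]
  · intro u v _ _ hu hv a
    rw [add_tmul, map_add, hu a, hv a, map_add, mul_add]
  · intro u v _ _ hu hv a
    obtain ⟨p, a1, a2, hca⟩ := exists_rep (St.DJ.comul a)
    have hAc := St.A.comul_incl₂ a p a1 a2 hca
    rw [← St.H.mul_left_one u v 1, St.tau_mul_right' _ _ _ _ _ hAc]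
    have hsum : ∑ i, St.DJ.counit (a1 i) * St.DJ.counit (a2 i) = St.DJ.counit a := by
      have h3 := congrArg St.DJ.counit (St.DJ.rep_counit_left hca)
      simpa [smul_eq_mul] using h3
    calc ∑ i, St.τ ((1:R) ⊗ₜ[k] a1 i) (v ⊗ₜ[k] (1:K))
          * St.τ ((1:R) ⊗ₜ[k] a2 i) (u ⊗ₜ[k] (1:K))
        = ∑ i, (St.DJ.counit (a1 i) * St.DJ.counit (a2 i))
            * (St.SB.counit u * St.SB.counit v) := by
          refine Finset.sum_congr rfl fun i _ => ?_
          rw [hv (a1 i), hu (a2 i)]; ring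
      _ = St.DJ.counit a * St.SB.counit (u * v) := by
          rw [← Finset.sum_mul, hsum, St.SB.counit_mul]

end Core


section Core2

/-- (E1):  τ(r ⊗ a, 1 ⊗ x) = ε(r) τ₀(a, x). -/
lemma Setup.tau_Ra_K (St : Setup k J K R S) (r : R) (a : J) (x : K) :
    St.τ (r ⊗ₜ[k] a) ((1:S) ⊗ₜ[k] x) = St.RB.counit r * St.τ₀ a x := by
  obtain ⟨q, x1, x2, hx⟩ := exists_rep (St.DK.comul x)
  have hAc := St.H.comul_incl₂ x q x1 x2 hx
  have hmul : r ⊗ₜ[k] a = St.A.Amul (r ⊗ₜ[k] (1:J)) ((1:R) ⊗ₜ[k] a) := by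
    rw [St.A.mul_left_one, mul_one]
  rw [hmul, St.tau_mul_left' _ _ _ _ _ hAc]
  have h2 : ∑ j, St.DK.counit (x1 j) * St.τ₀ a (x2 j) = St.τ₀ a x := by
    have h3 := congrArg (St.τ₀ a) (St.DK.rep_counit_left hx)
    simpa [smul_eq_mul] using h3
  calc ∑ j, St.τ (r ⊗ₜ[k] (1:J)) ((1:S) ⊗ₜ[k] x1 j)
        * St.τ ((1:R) ⊗ₜ[k] a) ((1:S) ⊗ₜ[k] x2 j)
      = ∑ j, St.RB.counit r * (St.DK.counit (x1 j) * St.τ₀ a (x2 j)) := by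
        refine Finset.sum_congr rfl fun j _ => ?_
        rw [St.tau_R_K r (x1 j), St.τ_ext]; ring
    _ = St.RB.counit r * St.τ₀ a x := by rw [← Finset.mul_sum, h2]

/-- (C'):  τ(1 ⊗ a, s ⊗ x) = ε(s) τ₀(a, x). -/
lemma Setup.tau_J_SK (St : Setup k J K R S) (a : J) (s : S) (x : K) :
    St.τ ((1:R) ⊗ₜ[k] a) (s ⊗ₜ[k] x) = St.SB.counit s * St.τ₀ a x := by
  obtain ⟨p, a1, a2, hca⟩ := exists_rep (St.DJ.comul a)
  have hAc := St.A.comul_incl₂ a p a1 a2 hca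
  have hmul : s ⊗ₜ[k] x = St.H.Amul (s ⊗ₜ[k] (1:K)) ((1:S) ⊗ₜ[k] x) := by
    rw [St.H.mul_left_one, mul_one]
  rw [hmul, St.tau_mul_right' _ _ _ _ _ hAc]
  have h2 : ∑ i, St.DJ.counit (a2 i) * St.τ₀ (a1 i) x = St.τ₀ a x := by
    have h3 := congrArg (fun z => St.τ₀ z x) (St.DJ.rep_counit_right hca)
    simpa [smul_eq_mul, map_sum, LinearMap.sum_apply, LinearMap.smul_apply] using h3
  calc ∑ i, St.τ ((1:R) ⊗ₜ[k] a1 i) ((1:S) ⊗ₜ[k] x)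
        * St.τ ((1:R) ⊗ₜ[k] a2 i) (s ⊗ₜ[k] (1:K))
      = ∑ i, St.SB.counit s * (St.DJ.counit (a2 i) * St.τ₀ (a1 i) x) := by
        refine Finset.sum_congr rfl fun i _ => ?_
        rw [St.τ_ext, St.tau_J_S s (a2 i)]; ring
    _ = St.SB.counit s * St.τ₀ a x := by rw [← Finset.mul_sum, h2]

/-- (G):  τ(r ⊗ 1, s ⊗ x) = ∑ τ₀(r_J, x) τ_RS(r_R, s). -/
lemma Setup.tau_R_SK (St : Setup k J K R S) (r : R) (s : S) (x : K)
    (n : ℕ) (rJ : Fin n → J) (rV : Fin n → R)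
    (h : St.RB.coact r = ∑ i, rJ i ⊗ₜ[k] rV i) :
    St.τ (r ⊗ₜ[k] (1:J)) (s ⊗ₜ[k] x)
      = ∑ i, St.τ₀ (rJ i) x * St.tauRS (rV i) s := by
  obtain ⟨m, r1, r2, hcr⟩ := exists_rep (St.RB.comul r)
  obtain ⟨m', ρJ, ρV, hco⟩ := exists_rep_fam (fun u => St.RB.coact (r2 u))
  have hAc := St.A.comul_incl₁ r m m' r1 r2 ρJ ρV hcr hco
  have hmul : s ⊗ₜ[k] x = St.H.Amul (s ⊗ₜ[k] (1:K)) ((1:S) ⊗ₜ[k] x) := by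
    rw [St.H.mul_left_one, mul_one]
  rw [hmul, St.tau_mul_right₂ _ _ _ _ _ hAc]
  set Bl : J →ₗ[k] R →ₗ[k] k :=
    ((LinearMap.mul k k).comp (St.τ₀.flip x)).compl₂ (St.tauRS.flip s) with hBl
  have hBl_apply : ∀ (b : J) (v : R), (TensorProduct.lift Bl) (b ⊗ₜ[k] v)
      = St.τ₀ b x * St.tauRS v s := by
    intro b v
    simp [hBl, LinearMap.mul_apply']
  have helem : ∑ u, St.RB.counit (r1 u) • (∑ w, ρJ u w ⊗ₜ[k] ρV u w)
      = ∑ i, rJ i ⊗ₜ[k] rV i := by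
    rw [← h]
    calc ∑ u, St.RB.counit (r1 u) • (∑ w, ρJ u w ⊗ₜ[k] ρV u w)
        = ∑ u, St.RB.counit (r1 u) • St.RB.coact (r2 u) := by
          refine Finset.sum_congr rfl fun u _ => by rw [hco u]
      _ = St.RB.coact (∑ u, St.RB.counit (r1 u) • r2 u) := by
          rw [map_sum]
          exact Finset.sum_congr rfl fun u _ => (map_smul _ _ _).symm
      _ = St.RB.coact r := by rw [St.RB.rep_counit_left hcr]
  have happ := congrArg (TensorProduct.lift Bl) helem
  simp only [map_sum, map_smul, smul_eq_mul] at happ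
  calc ∑ u, ∑ w, St.τ (r1 u ⊗ₜ[k] ρJ u w) ((1:S) ⊗ₜ[k] x)
        * St.τ (ρV u w ⊗ₜ[k] (1:J)) (s ⊗ₜ[k] (1:K))
      = ∑ u, St.RB.counit (r1 u)
          * ∑ w, (TensorProduct.lift Bl) (ρJ u w ⊗ₜ[k] ρV u w) := by
        refine Finset.sum_congr rfl fun u _ => ?_
        rw [Finset.mul_sum]
        refine Finset.sum_congr rfl fun w _ => ?_
        rw [St.tau_Ra_K, ← St.tauRS_apply, hBl_apply]; ring
    _ = ∑ i, (TensorProduct.lift Bl) (rJ i ⊗ₜ[k] rV i) := by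
        rw [← happ]
    _ = ∑ i, St.τ₀ (rJ i) x * St.tauRS (rV i) s := by
        exact Finset.sum_congr rfl fun i _ => hBl_apply _ _

/-- (E2):  τ(r ⊗ a, s ⊗ 1) = τ_RS(r, s) ε(a). -/
lemma Setup.tau_RaS1 (St : Setup k J K R S) (r : R) (a : J) (s : S) :
    St.τ (r ⊗ₜ[k] a) (s ⊗ₜ[k] (1:K)) = St.tauRS r s * St.DJ.counit a := by
  obtain ⟨m, s1, s2, hcs⟩ := exists_rep (St.SB.comul s)
  obtain ⟨m', σK, σW, hco⟩ := exists_rep_fam (fun u => St.SB.coact (s2 u))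
  have hAc := St.H.comul_incl₁ s m m' s1 s2 σK σW hcs hco
  obtain ⟨n, rJ, rV, hcoar⟩ := exists_rep (St.RB.coact r)
  have hmul : r ⊗ₜ[k] a = St.A.Amul (r ⊗ₜ[k] (1:J)) ((1:R) ⊗ₜ[k] a) := by
    rw [St.A.mul_left_one, mul_one]
  rw [hmul, St.tau_mul_left₂ _ _ _ _ _ hAc]
  have inner : ∀ (u : Fin m) (i : Fin n),
      ∑ w, St.τ₀ (rJ i) (σK u w) * St.SB.counit (σW u w)
        = St.SB.counit (s2 u) * St.DJ.counit (rJ i) := by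
    intro u i
    have h0 := St.SB.counit_coact (s2 u) m' (σK u) (σW u) (hco u)
    have h1 := congrArg (St.τ₀ (rJ i)) h0
    simp only [map_sum, map_smul, smul_eq_mul] at h1
    rw [St.τ₀_one_right] at h1
    rw [← h1]
    exact Finset.sum_congr rfl fun w _ => mul_comm _ _
  have hstep : ∀ u : Fin m,
      ∑ w, St.τ (r ⊗ₜ[k] (1:J)) (s1 u ⊗ₜ[k] σK u w)
        * St.τ ((1:R) ⊗ₜ[k] a) (σW u w ⊗ₜ[k] (1:K))
      = St.DJ.counit a * (St.SB.counit (s2 u) * St.tauRS r (s1 u)) := by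
    intro u
    have hrc := congrArg (fun z => St.tauRS z (s1 u)) (St.RB.rep_coact_counit hcoar)
    simp only [map_sum, LinearMap.sum_apply, map_smul, LinearMap.smul_apply,
      smul_eq_mul] at hrc
    calc ∑ w, St.τ (r ⊗ₜ[k] (1:J)) (s1 u ⊗ₜ[k] σK u w)
          * St.τ ((1:R) ⊗ₜ[k] a) (σW u w ⊗ₜ[k] (1:K))
        = ∑ w, ∑ i, (St.τ₀ (rJ i) (σK u w) * St.SB.counit (σW u w))
            * (St.DJ.counit a * St.tauRS (rV i) (s1 u)) := by
          refine Finset.sum_congr rfl fun w _ => ?_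
          rw [St.tau_R_SK r (s1 u) (σK u w) n rJ rV hcoar, St.tau_J_S (σW u w) a,
            Finset.sum_mul]
          refine Finset.sum_congr rfl fun i _ => ?_
          ring
      _ = ∑ i, (∑ w, St.τ₀ (rJ i) (σK u w) * St.SB.counit (σW u w))
            * (St.DJ.counit a * St.tauRS (rV i) (s1 u)) := by
          rw [Finset.sum_comm]
          exact Finset.sum_congr rfl fun i _ => (Finset.sum_mul _ _ _).symm
      _ = ∑ i, St.DJ.counit a * St.SB.counit (s2 u)
            * (St.DJ.counit (rJ i) * St.tauRS (rV i) (s1 u)) := by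
          refine Finset.sum_congr rfl fun i _ => ?_
          rw [inner u i]; ring
      _ = St.DJ.counit a * (St.SB.counit (s2 u) * St.tauRS r (s1 u)) := by
          rw [← Finset.mul_sum, hrc]; ring
  calc ∑ u, ∑ w, St.τ (r ⊗ₜ[k] (1:J)) (s1 u ⊗ₜ[k] σK u w)
        * St.τ ((1:R) ⊗ₜ[k] a) (σW u w ⊗ₜ[k] (1:K))
      = ∑ u, St.DJ.counit a * (St.SB.counit (s2 u) * St.tauRS r (s1 u)) := by
        exact Finset.sum_congr rfl fun u _ => hstep u
    _ = St.tauRS r s * St.DJ.counit a := by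
        have hsc := congrArg (St.tauRS r) (St.SB.rep_counit_right hcs)
        simp only [map_sum, map_smul, smul_eq_mul] at hsc
        rw [← Finset.mul_sum, hsc, mul_comm]

end Core2


section Main24

/-- (2.4):  τ(ra, sx) = τ₀(r_J, x₁) τ_RS(r_R, s) τ₀(a, x₂). -/
lemma Setup.tau_full (St : Setup k J K R S) (r : R) (a : J) (s : S) (x : K)
    (p q : ℕ) (rJ : Fin p → J) (rV : Fin p → R) (x1 x2 : Fin q → K)
    (h1 : St.RB.coact r = ∑ i, rJ i ⊗ₜ[k] rV i)
    (h2 : St.DK.comul x = ∑ j, x1 j ⊗ₜ[k] x2 j) :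
    St.τ (r ⊗ₜ[k] a) (s ⊗ₜ[k] x)
      = ∑ i, ∑ j, St.τ₀ (rJ i) (x1 j) * St.tauRS (rV i) s * St.τ₀ a (x2 j) := by
  obtain ⟨m, s1, s2, hcs⟩ := exists_rep (St.SB.comul s)
  obtain ⟨m', σK, σW, hco⟩ := exists_rep_fam (fun u => St.SB.coact (s2 u))
  have hAc := St.H.Acomul_def s x m m' q s1 s2 σK σW x1 x2 hcs hco h2
  have hmul : r ⊗ₜ[k] a = St.A.Amul (r ⊗ₜ[k] (1:J)) ((1:R) ⊗ₜ[k] a) := by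
    rw [St.A.mul_left_one, mul_one]
  rw [hmul, St.tau_mul_left₃ _ _ _ _ _ hAc]
  -- inner sums
  have hw : ∀ (u : Fin m) (i : Fin p) (j : Fin q),
      ∑ w, St.τ₀ (rJ i) (σK u w * x1 j) * St.SB.counit (σW u w)
        = St.SB.counit (s2 u) * St.τ₀ (rJ i) (x1 j) := by
    intro u i j
    have h0 := St.SB.counit_coact (s2 u) m' (σK u) (σW u) (hco u)
    have h3 := congrArg ((St.τ₀ (rJ i)).comp (LinearMap.mulRight k (x1 j))) h0
    simp only [map_sum, map_smul, smul_eq_mul, LinearMap.coe_comp,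
      Function.comp_apply, LinearMap.mulRight_apply, one_mul] at h3
    rw [← h3]
    exact Finset.sum_congr rfl fun w _ => mul_comm _ _
  have hu : ∀ i : Fin p,
      ∑ u, St.SB.counit (s2 u) * St.tauRS (rV i) (s1 u) = St.tauRS (rV i) s := by
    intro i
    have h3 := congrArg (St.tauRS (rV i)) (St.SB.rep_counit_right hcs)
    simpa [smul_eq_mul] using h3
  calc ∑ u, ∑ w, ∑ j,
        St.τ (r ⊗ₜ[k] (1:J)) (s1 u ⊗ₜ[k] (σK u w * x1 j))
          * St.τ ((1:R) ⊗ₜ[k] a) (σW u w ⊗ₜ[k] x2 j)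
      = ∑ u, ∑ w, ∑ j, ∑ i,
          (St.τ₀ (rJ i) (σK u w * x1 j) * St.SB.counit (σW u w))
            * (St.tauRS (rV i) (s1 u) * St.τ₀ a (x2 j)) := by
        refine Finset.sum_congr rfl fun u _ => Finset.sum_congr rfl fun w _ =>
          Finset.sum_congr rfl fun j _ => ?_
        rw [St.tau_R_SK r (s1 u) (σK u w * x1 j) p rJ rV h1,
          St.tau_J_SK a (σW u w) (x2 j), Finset.sum_mul]
        exact Finset.sum_congr rfl fun i _ => by ring
    _ = ∑ u, ∑ j, ∑ i, ∑ w,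
          (St.τ₀ (rJ i) (σK u w * x1 j) * St.SB.counit (σW u w))
            * (St.tauRS (rV i) (s1 u) * St.τ₀ a (x2 j)) := by
        refine Finset.sum_congr rfl fun u _ => ?_
        rw [Finset.sum_comm]
        exact Finset.sum_congr rfl fun j _ => Finset.sum_comm
    _ = ∑ u, ∑ j, ∑ i,
          (St.SB.counit (s2 u) * St.τ₀ (rJ i) (x1 j))
            * (St.tauRS (rV i) (s1 u) * St.τ₀ a (x2 j)) := by
        refine Finset.sum_congr rfl fun u _ => Finset.sum_congr rfl fun j _ =>
          Finset.sum_congr rfl fun i _ => ?_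
        rw [← Finset.sum_mul, hw u i j]
    _ = ∑ j, ∑ i, (∑ u, St.SB.counit (s2 u) * St.tauRS (rV i) (s1 u))
          * (St.τ₀ (rJ i) (x1 j) * St.τ₀ a (x2 j)) := by
        rw [Finset.sum_comm]
        refine Finset.sum_congr rfl fun j _ => ?_
        rw [Finset.sum_comm]
        refine Finset.sum_congr rfl fun i _ => ?_
        rw [Finset.sum_mul]
        exact Finset.sum_congr rfl fun u _ => by ring
    _ = ∑ i, ∑ j, St.τ₀ (rJ i) (x1 j) * St.tauRS (rV i) s * St.τ₀ a (x2 j) := by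
        rw [Finset.sum_comm]
        refine Finset.sum_congr rfl fun i _ => Finset.sum_congr rfl fun j _ => ?_
        rw [hu i]; ring

end Main24


section Main25

/-- (2.5):  τ(r, ss') = τ(r₍₁₎, s') τ(r₍₂₎, s). -/
lemma Setup.tau_mulS (St : Setup k J K R S) (r : R) (s s' : S) (p : ℕ)
    (r1 r2 : Fin p → R) (h : St.RB.comul r = ∑ i, r1 i ⊗ₜ[k] r2 i) :
    St.tauRS r (s * s') = ∑ i, St.tauRS (r1 i) s' * St.tauRS (r2 i) s := by
  obtain ⟨m', ρJ, ρV, hco⟩ := exists_rep_fam (fun i => St.RB.coact (r2 i))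
  have hAc := St.A.comul_incl₁ r p m' r1 r2 ρJ ρV h hco
  rw [St.tauRS_apply r (s * s'), ← St.H.mul_left_one s s' 1,
    St.tau_mul_right₂ _ _ _ _ _ hAc]
  refine Finset.sum_congr rfl fun i _ => ?_
  have hrc := congrArg (fun z => St.tauRS z s) (St.RB.rep_coact_counit (hco i))
  simp only [map_sum, LinearMap.sum_apply, map_smul, LinearMap.smul_apply,
    smul_eq_mul] at hrc
  calc ∑ w, St.τ (r1 i ⊗ₜ[k] ρJ i w) (s' ⊗ₜ[k] (1:K))
        * St.τ (ρV i w ⊗ₜ[k] (1:J)) (s ⊗ₜ[k] (1:K))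
      = ∑ w, St.tauRS (r1 i) s' * (St.DJ.counit (ρJ i w) * St.tauRS (ρV i w) s) := by
        refine Finset.sum_congr rfl fun w _ => ?_
        rw [St.tau_RaS1, ← St.tauRS_apply]; ring
    _ = St.tauRS (r1 i) s' * St.tauRS (r2 i) s := by rw [← Finset.mul_sum, hrc]

end Main25

section MainAct

/-- (H'):  τ_RS(r, y ⊳ t) = τ₀(r_J, 𝒮(y)) τ_RS(r_R, t). -/
lemma Setup.tau_act (St : Setup k J K R S) (r : R) (t : S) (y : K) (n : ℕ)
    (rJ : Fin n → J) (rV : Fin n → R)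
    (h : St.RB.coact r = ∑ i, rJ i ⊗ₜ[k] rV i) :
    St.tauRS r (St.SB.act y t)
      = ∑ i, St.τ₀ (rJ i) (St.DK.antipode y) * St.tauRS (rV i) t := by
  obtain ⟨cc, ya, yb, hcy⟩ := exists_rep (St.DK.comul y)
  obtain ⟨ee, ya1, ya2, hye⟩ := exists_rep_fam (fun c => St.DK.comul (ya c))
  set f : K →ₗ[k] S := St.SB.act.flip t with hf
  set mm : K ⊗[k] K →ₗ[k] K := (LinearMap.mul' k K) ∘ₗ (St.DK.antipode.lTensor K)
    with hmm
  have key : (St.SB.act y t) ⊗ₜ[k] (1:K)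
      = ∑ c, ∑ e, St.SB.act (ya1 c e) t ⊗ₜ[k] (ya2 c e * St.DK.antipode (yb c)) := by
    have e1 : (TensorProduct.map f mm) ((TensorProduct.assoc k K K K)
        ((St.DK.comul.rTensor K) (St.DK.comul y)))
        = ∑ c, ∑ e, St.SB.act (ya1 c e) t ⊗ₜ[k] (ya2 c e * St.DK.antipode (yb c)) := by
      rw [hcy]
      simp only [map_sum, LinearMap.rTensor_tmul]
      refine Finset.sum_congr rfl fun c _ => ?_
      rw [hye c, sum_tmul, map_sum, map_sum]
      refine Finset.sum_congr rfl fun e _ => ?_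
      rw [assoc_tmul, map_tmul]
      simp [hf, hmm, LinearMap.mul'_apply]
    have e2 : (TensorProduct.map f mm) ((TensorProduct.assoc k K K K)
        ((St.DK.comul.rTensor K) (St.DK.comul y)))
        = (St.SB.act y t) ⊗ₜ[k] (1:K) := by
      rw [St.DK.coassoc y, hcy]
      simp only [map_sum, LinearMap.lTensor_tmul]
      calc ∑ c, (TensorProduct.map f mm) (ya c ⊗ₜ[k] St.DK.comul (yb c))
          = ∑ c, St.SB.act (ya c) t ⊗ₜ[k] (St.DK.counit (yb c) • (1:K)) := by
            refine Finset.sum_congr rfl fun c _ => ?_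
            rw [map_tmul]
            have h5 := St.DK.conv_antipode (yb c)
            rw [hmm, LinearMap.comp_apply, h5]
            simp [hf]
        _ = (∑ c, St.DK.counit (yb c) • St.SB.act (ya c) t) ⊗ₜ[k] (1:K) := by
            rw [sum_tmul]
            exact Finset.sum_congr rfl fun c _ => by rw [tmul_smul, smul_tmul']
        _ = (St.SB.act y t) ⊗ₜ[k] (1:K) := by
            congr 1
            have h4 := congrArg (fun z => St.SB.act z t) (St.DK.rep_counit_right hcy)
            simpa [map_sum, LinearMap.sum_apply, map_smul, LinearMap.smul_apply]
              using h4
    rw [← e1, e2]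
  have elem : (St.SB.act y t) ⊗ₜ[k] (1:K)
      = ∑ c, St.H.Amul ((1:S) ⊗ₜ[k] ya c) (t ⊗ₜ[k] St.DK.antipode (yb c)) := by
    rw [key]
    exact Finset.sum_congr rfl fun c _ =>
      (St.H.mul_one_left (ya c) t (St.DK.antipode (yb c)) ee (ya1 c) (ya2 c)
        (hye c)).symm
  obtain ⟨m, r1, r2, hcr⟩ := exists_rep (St.RB.comul r)
  obtain ⟨m', ρJ, ρV, hco⟩ := exists_rep_fam (fun u => St.RB.coact (r2 u))
  have hAc := St.A.comul_incl₁ r m m' r1 r2 ρJ ρV hcr hco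
  obtain ⟨aa, αJ, αV, hα⟩ := exists_rep_fam (fun u => St.RB.coact (r1 u))
  obtain ⟨bb, β1, β2, hβ⟩ :=
    exists_rep_fam (fun c => St.DK.comul (St.DK.antipode (yb c)))
  have start : St.tauRS r (St.SB.act y t)
      = ∑ c, St.τ (r ⊗ₜ[k] (1:J))
          (St.H.Amul ((1:S) ⊗ₜ[k] ya c) (t ⊗ₜ[k] St.DK.antipode (yb c))) := by
    rw [St.tauRS_apply, elem, map_sum]
  -- inner simplifications
  have hw1 : ∀ (u : Fin m) (c : Fin cc) (n2 : Fin bb),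
      ∑ w, St.τ₀ (ρJ u w) (β2 c n2) * St.RB.counit (ρV u w)
        = St.RB.counit (r2 u) * St.DK.counit (β2 c n2) := by
    intro u c n2
    have h0 := St.RB.counit_coact (r2 u) m' (ρJ u) (ρV u) (hco u)
    have h1 := congrArg (fun z => St.τ₀ z (β2 c n2)) h0
    simp only [map_sum, LinearMap.sum_apply, map_smul, LinearMap.smul_apply,
      smul_eq_mul] at h1
    rw [St.τ₀_one_left] at h1
    rw [← h1]
    exact Finset.sum_congr rfl fun w _ => mul_comm _ _
  have hn2 : ∀ (u : Fin m) (v : Fin aa) (c : Fin cc),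
      ∑ n2, St.τ₀ (αJ u v) (β1 c n2) * St.DK.counit (β2 c n2)
        = St.τ₀ (αJ u v) (St.DK.antipode (yb c)) := by
    intro u v c
    have h1 := congrArg (St.τ₀ (αJ u v)) (St.DK.rep_counit_right (hβ c))
    simp only [map_sum, map_smul, smul_eq_mul] at h1
    rw [← h1]
    exact Finset.sum_congr rfl fun n2 _ => mul_comm _ _
  have hc : ∀ (u : Fin m) (v : Fin aa),
      ∑ c, St.DK.counit (ya c) * St.τ₀ (αJ u v) (St.DK.antipode (yb c))
        = St.τ₀ (αJ u v) (St.DK.antipode y) := by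
    intro u v
    have h1 := congrArg ((St.τ₀ (αJ u v)) ∘ₗ St.DK.antipode)
      (St.DK.rep_counit_left hcy)
    simp only [map_sum, map_smul, smul_eq_mul, LinearMap.coe_comp,
      Function.comp_apply] at h1
    exact h1
  have hfinal : ∑ u, St.RB.counit (r2 u)
        * ∑ v, St.τ₀ (αJ u v) (St.DK.antipode y) * St.tauRS (αV u v) t
      = ∑ i, St.τ₀ (rJ i) (St.DK.antipode y) * St.tauRS (rV i) t := by
    set Bl : J →ₗ[k] R →ₗ[k] k :=
      ((LinearMap.mul k k).comp (St.τ₀.flip (St.DK.antipode y))).compl₂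
        (St.tauRS.flip t) with hBl
    have hBl_apply : ∀ (b : J) (v : R), (TensorProduct.lift Bl) (b ⊗ₜ[k] v)
        = St.τ₀ b (St.DK.antipode y) * St.tauRS v t := by
      intro b v
      simp [hBl, LinearMap.mul_apply']
    have helem : ∑ u, St.RB.counit (r2 u) • (∑ v, αJ u v ⊗ₜ[k] αV u v)
        = ∑ i, rJ i ⊗ₜ[k] rV i := by
      rw [← h]
      calc ∑ u, St.RB.counit (r2 u) • (∑ v, αJ u v ⊗ₜ[k] αV u v)
          = ∑ u, St.RB.counit (r2 u) • St.RB.coact (r1 u) := by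
            refine Finset.sum_congr rfl fun u _ => by rw [hα u]
        _ = St.RB.coact (∑ u, St.RB.counit (r2 u) • r1 u) := by
            rw [map_sum]
            exact Finset.sum_congr rfl fun u _ => (map_smul _ _ _).symm
        _ = St.RB.coact r := by rw [St.RB.rep_counit_right hcr]
    have happ := congrArg (TensorProduct.lift Bl) helem
    simp only [map_sum, map_smul, smul_eq_mul] at happ
    calc ∑ u, St.RB.counit (r2 u)
          * ∑ v, St.τ₀ (αJ u v) (St.DK.antipode y) * St.tauRS (αV u v) t
        = ∑ u, St.RB.counit (r2 u)
            * ∑ v, (TensorProduct.lift Bl) (αJ u v ⊗ₜ[k] αV u v) := by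
          refine Finset.sum_congr rfl fun u _ => ?_
          rw [Finset.mul_sum, Finset.mul_sum]
          exact Finset.sum_congr rfl fun v _ => by rw [hBl_apply]
      _ = ∑ i, (TensorProduct.lift Bl) (rJ i ⊗ₜ[k] rV i) := by rw [← happ]
      _ = ∑ i, St.τ₀ (rJ i) (St.DK.antipode y) * St.tauRS (rV i) t := by
          exact Finset.sum_congr rfl fun i _ => hBl_apply _ _
  rw [start]
  calc ∑ c, St.τ (r ⊗ₜ[k] (1:J))
        (St.H.Amul ((1:S) ⊗ₜ[k] ya c) (t ⊗ₜ[k] St.DK.antipode (yb c)))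
      = ∑ c, ∑ u, ∑ w,
          (∑ v, ∑ n2, (St.τ₀ (αJ u v) (β1 c n2) * St.tauRS (αV u v) t)
            * (St.τ₀ (ρJ u w) (β2 c n2) * St.RB.counit (ρV u w)))
          * St.DK.counit (ya c) := by
        refine Finset.sum_congr rfl fun c _ => ?_
        rw [St.tau_mul_right₂ _ _ _ _ _ hAc]
        refine Finset.sum_congr rfl fun u _ => Finset.sum_congr rfl fun w _ => ?_
        rw [St.tau_full (r1 u) (ρJ u w) t (St.DK.antipode (yb c)) aa bb
          (αJ u) (αV u) (β1 c) (β2 c) (hα u) (hβ c), St.tau_R_K (ρV u w) (ya c),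
          Finset.sum_mul]
        rw [Finset.sum_mul]
        refine Finset.sum_congr rfl fun v _ => ?_
        rw [Finset.sum_mul, Finset.sum_mul]
        refine Finset.sum_congr rfl fun n2 _ => ?_
        ring
    _ = ∑ c, ∑ u, ∑ v, ∑ n2,
          ((St.τ₀ (αJ u v) (β1 c n2) * St.tauRS (αV u v) t)
            * ((St.RB.counit (r2 u) * St.DK.counit (β2 c n2)))
            * St.DK.counit (ya c)) := by
        refine Finset.sum_congr rfl fun c _ => Finset.sum_congr rfl fun u _ => ?_
        calc ∑ w, (∑ v, ∑ n2, (St.τ₀ (αJ u v) (β1 c n2) * St.tauRS (αV u v) t)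
              * (St.τ₀ (ρJ u w) (β2 c n2) * St.RB.counit (ρV u w)))
              * St.DK.counit (ya c)
            = ∑ w, ∑ v, ∑ n2, ((St.τ₀ (αJ u v) (β1 c n2) * St.tauRS (αV u v) t)
                * (St.τ₀ (ρJ u w) (β2 c n2) * St.RB.counit (ρV u w)))
                * St.DK.counit (ya c) := by
              refine Finset.sum_congr rfl fun w _ => ?_
              rw [Finset.sum_mul]
              exact Finset.sum_congr rfl fun v _ => Finset.sum_mul _ _ _
          _ = ∑ v, ∑ n2, ∑ w, ((St.τ₀ (αJ u v) (β1 c n2) * St.tauRS (αV u v) t)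
                * (St.τ₀ (ρJ u w) (β2 c n2) * St.RB.counit (ρV u w)))
                * St.DK.counit (ya c) := by
              rw [Finset.sum_comm]
              exact Finset.sum_congr rfl fun v _ => Finset.sum_comm
          _ = ∑ v, ∑ n2, ((St.τ₀ (αJ u v) (β1 c n2) * St.tauRS (αV u v) t)
                * ((St.RB.counit (r2 u) * St.DK.counit (β2 c n2)))
                * St.DK.counit (ya c)) := by
              refine Finset.sum_congr rfl fun v _ => Finset.sum_congr rfl fun n2 _ => ?_
              calc ∑ w, ((St.τ₀ (αJ u v) (β1 c n2) * St.tauRS (αV u v) t)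
                    * (St.τ₀ (ρJ u w) (β2 c n2) * St.RB.counit (ρV u w)))
                    * St.DK.counit (ya c)
                  = ((St.τ₀ (αJ u v) (β1 c n2) * St.tauRS (αV u v) t)
                    * (∑ w, St.τ₀ (ρJ u w) (β2 c n2) * St.RB.counit (ρV u w)))
                    * St.DK.counit (ya c) := by
                    rw [← Finset.sum_mul, ← Finset.mul_sum]
                _ = _ := by rw [hw1 u c n2]
    _ = ∑ i, St.τ₀ (rJ i) (St.DK.antipode y) * St.tauRS (rV i) t := by
        rw [← hfinal]
        rw [Finset.sum_comm]
        refine Finset.sum_congr rfl fun u _ => ?_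
        calc ∑ c, ∑ v, ∑ n2, ((St.τ₀ (αJ u v) (β1 c n2) * St.tauRS (αV u v) t)
              * ((St.RB.counit (r2 u) * St.DK.counit (β2 c n2)))
              * St.DK.counit (ya c))
            = ∑ v, ∑ c, ∑ n2, ((St.τ₀ (αJ u v) (β1 c n2) * St.tauRS (αV u v) t)
                * ((St.RB.counit (r2 u) * St.DK.counit (β2 c n2)))
                * St.DK.counit (ya c)) := Finset.sum_comm
          _ = ∑ v, ∑ c,
                St.RB.counit (r2 u) * St.tauRS (αV u v) t * (St.DK.counit (ya c)
                  * ∑ n2, St.τ₀ (αJ u v) (β1 c n2) * St.DK.counit (β2 c n2)) := by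
              refine Finset.sum_congr rfl fun v _ => Finset.sum_congr rfl fun c _ => ?_
              rw [Finset.mul_sum, Finset.mul_sum]
              refine Finset.sum_congr rfl fun n2 _ => ?_
              ring
          _ = ∑ v, St.RB.counit (r2 u) * St.tauRS (αV u v) t
                * St.τ₀ (αJ u v) (St.DK.antipode y) := by
              refine Finset.sum_congr rfl fun v _ => ?_
              rw [← Finset.mul_sum]
              congr 1
              calc ∑ c, St.DK.counit (ya c)
                    * ∑ n2, St.τ₀ (αJ u v) (β1 c n2) * St.DK.counit (β2 c n2)
                  = ∑ c, St.DK.counit (ya c)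
                      * St.τ₀ (αJ u v) (St.DK.antipode (yb c)) := by
                    exact Finset.sum_congr rfl fun c _ => by rw [hn2 u v c]
                _ = St.τ₀ (αJ u v) (St.DK.antipode y) := hc u v
          _ = St.RB.counit (r2 u)
                * ∑ v, St.τ₀ (αJ u v) (St.DK.antipode y) * St.tauRS (αV u v) t := by
              rw [Finset.mul_sum]
              exact Finset.sum_congr rfl fun v _ => by ring

end MainAct


section Main26

/-- (2.6):  τ(rr', s) = τ(r, 𝒮̄(s₍₂₎K) ⊳ s₍₁₎) τ(r', s₍₂₎S). -/
lemma Setup.tau_mulR (St : Setup k J K R S) (r r' : R) (s : S) (p q : ℕ)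
    (s1 s2 : Fin p → S) (sK : Fin p → Fin q → K) (sV : Fin p → Fin q → S)
    (h1 : St.SB.comul s = ∑ i, s1 i ⊗ₜ[k] s2 i)
    (h2 : ∀ i, St.SB.coact (s2 i) = ∑ j, sK i j ⊗ₜ[k] sV i j) :
    St.tauRS (r * r') s
      = ∑ i, ∑ j, St.tauRS r (St.SB.act (St.DK.pode (sK i j)) (s1 i))
          * St.tauRS r' (sV i j) := by
  obtain ⟨n, rJ, rV, hcoar⟩ := exists_rep (St.RB.coact r)
  have hAc := St.H.comul_incl₁ s p q s1 s2 sK sV h1 h2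
  rw [St.tauRS_apply (r * r') s, ← St.A.mul_left_one r r' 1,
    St.tau_mul_left₂ _ _ _ _ _ hAc]
  refine Finset.sum_congr rfl fun i _ => Finset.sum_congr rfl fun j _ => ?_
  rw [St.tau_R_SK r (s1 i) (sK i j) n rJ rV hcoar, ← St.tauRS_apply r' (sV i j),
    St.tau_act r (s1 i) (St.DK.pode (sK i j)) n rJ rV hcoar,
    St.DK.antipode_pode (sK i j)]

end Main26


theorem statement6 (St : Setup k J K R S) :
    -- (2.4):  τ(ra, sx) = τ₀(r_J, x₁) τ(r_R, s) τ₀(a, x₂)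
    (∀ (r : R) (a : J) (s : S) (x : K) (p q : ℕ)
        (rJ : Fin p → J) (rV : Fin p → R) (x1 x2 : Fin q → K),
      St.RB.coact r = ∑ i, rJ i ⊗ₜ[k] rV i →
      St.DK.comul x = ∑ j, x1 j ⊗ₜ[k] x2 j →
      St.τ (r ⊗ₜ[k] a) (s ⊗ₜ[k] x)
        = ∑ i, ∑ j, St.τ₀ (rJ i) (x1 j) * St.tauRS (rV i) s * St.τ₀ a (x2 j)) ∧
    -- (2.5):  τ(r, ss') = τ(r₍₁₎, s') τ(r₍₂₎, s)
    (∀ (r : R) (s s' : S) (p : ℕ) (r1 r2 : Fin p → R),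
      St.RB.comul r = ∑ i, r1 i ⊗ₜ[k] r2 i →
      St.tauRS r (s * s') = ∑ i, St.tauRS (r1 i) s' * St.tauRS (r2 i) s) ∧
    -- (2.6):  τ(rr', s) = τ(r, 𝒮̄_K(s₍₂₎K) ⊳ s₍₁₎) τ(r', s₍₂₎S)
    (∀ (r r' : R) (s : S) (p q : ℕ) (s1 s2 : Fin p → S)
        (sK : Fin p → Fin q → K) (sV : Fin p → Fin q → S),
      St.SB.comul s = ∑ i, s1 i ⊗ₜ[k] s2 i →
      (∀ i, St.SB.coact (s2 i) = ∑ j, sK i j ⊗ₜ[k] sV i j) →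
      St.tauRS (r * r') s
        = ∑ i, ∑ j, St.tauRS r (St.SB.act (St.DK.pode (sK i j)) (s1 i))
            * St.tauRS r' (sV i j)) := by
  refine ⟨?_, ?_, ?_⟩
  · intro r a s x p q rJ rV x1 x2 h1 h2
    exact St.tau_full r a s x p q rJ rV x1 x2 h1 h2
  · intro r s s' p r1 r2 h
    exact St.tau_mulS r s s' p r1 r2 h
  · intro r r' s p q s1 s2 sK sV h1 h2
    exact St.tau_mulR r r' s p q s1 s2 sK sV h1 h2

end QB
end
end

section
/- In the standing setup, let ν : R⊗R^g → End(R) be the canonical linear injection ν(r⊗f)(r') = r⟨f, r'⟩, let χ : R⊗R → R⊗R be the right R-linear isomorphism χ(r⊗r') = r₍₁₎ ⊗ r₍₂₎r', let χ^∨ : End(R) → End(R) be the induced linear isomorphism (the right R-linear dual of χ), and set μ = χ^∨ ∘ ν. Then: (1) μ : R⊗R^g → End(R) is the linear injection given by μ(r⊗f)(r') = r ⟨f, r'₍₁₎⟩ r'₍₂₎; (2) the composite ℬ = R⊗S → R⊗R^g → End(R), where the first map is id⊗τ_{RS}^r and the second is μ, coincides with ρ. -/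
open TensorProduct BigOperators

noncomputable section

namespace QB

variable {k : Type} [Field k]
variable {J : Type} [Ring J] [Algebra k J] {R : Type} [Ring R] [Algebra k R]

/-- The graded dual `R^g = ⊕ₙ R(n)*`, realized as the submodule of `R*` of functionals
vanishing on all components of sufficiently high degree. -/
def gdual (D : HopfData k J) (RB : BGH k J D R) : Submodule k (Module.Dual k R) where
  carrier := {f | ∃ N : ℕ, ∀ n, N ≤ n → ∀ r ∈ RB.grade n, f r = 0}
  add_mem' := by
    rintro f g ⟨N, hN⟩ ⟨M, hM⟩
    exact ⟨max N M, fun n hn r hr => by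
      simp [hN n (le_trans (le_max_left _ _) hn) r hr,
        hM n (le_trans (le_max_right _ _) hn) r hr]⟩
  zero_mem' := ⟨0, fun n _ r _ => rfl⟩
  smul_mem' := by
    rintro c f ⟨N, hN⟩
    exact ⟨N, fun n hn r hr => by simp [hN n hn r hr]⟩

/-- The degree-`n` part `R(n)*` of the graded dual: functionals vanishing on all
components of degree `≠ n`. -/
def ddual (D : HopfData k J) (RB : BGH k J D R) (n : ℕ) : Submodule k (Module.Dual k R) where
  carrier := {f | ∀ m, m ≠ n → ∀ r ∈ RB.grade m, f r = 0}
  add_mem' := by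
    intro f g hf hg
    intro m hm r hr
    simp [hf m hm r hr, hg m hm r hr]
  zero_mem' := fun m _ r _ => rfl
  smul_mem' := by
    intro c f hf m hm r hr
    simp [hf m hm r hr]

end QB

namespace QB

variable {k : Type} [Field k]
variable {J : Type} [Ring J] [Algebra k J] {R : Type} [Ring R] [Algebra k R]
variable {K S : Type} [Ring K] [Algebra k K] [Ring S] [Algebra k S]

/-- The canonical linear injection `ν : R ⊗ R^g → End(R)`, `ν(r ⊗ f)(r') = ⟨f, r'⟩ r`. -/
def nuMap (St : Setup k J K R S) :
    (R ⊗[k] ↥(gdual St.DJ St.RB)) →ₗ[k] (R →ₗ[k] R) :=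
  TensorProduct.lift <| LinearMap.mk₂ k
    (fun r f => LinearMap.smulRight ((gdual St.DJ St.RB).subtype f) r)
    (fun r r' f => by ext y; simp [smul_add])
    (fun c r f => by ext y; exact smul_comm _ c r)
    (fun r f f' => by ext y; simp [add_smul])
    (fun c r f => by
      ext y
      simp only [LinearMap.smulRight_apply, LinearMap.smul_apply, Submodule.coe_subtype,
        SetLike.val_smul, smul_eq_mul, mul_smul])

/-- `χ^∨ : End(R) → End(R)`, the right `R`-linear dual of
`χ(r ⊗ r') = r₍₁₎ ⊗ r₍₂₎ r'`; concretely `χ^∨(g)(r') = g(r'₍₁₎) r'₍₂₎`. -/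
def chiDual (St : Setup k J K R S) (g : R →ₗ[k] R) : R →ₗ[k] R :=
  (LinearMap.mul' k R) ∘ₗ (g.rTensor R) ∘ₗ St.RB.comul

set_option maxHeartbeats 1000000
set_option synthInstance.maxHeartbeats 400000

/-- Any element of a tensor product is a `Fin`-indexed sum of pure tensors. -/
lemma exists_fin_rep {M N : Type} [AddCommGroup M] [Module k M] [AddCommGroup N] [Module k N]
    (x : M ⊗[k] N) : ∃ (p : ℕ) (a : Fin p → M) (b : Fin p → N), x = ∑ i, a i ⊗ₜ[k] b i := by
  classical
  obtain ⟨T, hT⟩ := TensorProduct.exists_finset x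
  refine ⟨T.card, fun j => ((T.equivFin.symm j : T) : M × N).1,
    fun j => ((T.equivFin.symm j : T) : M × N).2, ?_⟩
  rw [hT, ← Finset.sum_coe_sort T (fun i => i.1 ⊗ₜ[k] i.2)]
  exact (Equiv.sum_comp T.equivFin.symm _).symm

/-- The braided antipode axiom `∑ r₍₁₎ 𝒮(r₍₂₎) = ε(r)·1`, as a statement about maps. -/
lemma conv_anti (St : Setup k J K R S) (r : R) :
    LinearMap.mul' k R ((St.RB.antipodeR.lTensor R) (St.RB.comul r))
      = St.RB.counit r • 1 := by
  obtain ⟨p, a, b, h⟩ := exists_fin_rep (St.RB.comul r)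
  have key := St.RB.conv_antipodeR r p a b h
  rw [h, map_sum, map_sum]
  simpa using key

/-- The map `h ↦ (r ↦ ∑ h(r₍₁₎) 𝒮(r₍₂₎))` is a retraction of `χ^∨`. -/
lemma retraction (St : Setup k J K R S) (g : R →ₗ[k] R) (r : R) :
    LinearMap.mul' k R
        (TensorProduct.map (chiDual St g) St.RB.antipodeR (St.RB.comul r)) = g r := by
  set Δ := St.RB.comul with hΔdef
  set Sa := St.RB.antipodeR with hSadef
  set m2 : R ⊗[k] R →ₗ[k] R := LinearMap.mul' k R ∘ₗ Sa.lTensor R with hm2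
  set E : R ⊗[k] (R ⊗[k] R) →ₗ[k] R := LinearMap.mul' k R ∘ₗ TensorProduct.map g m2 with hE
  have h1 : (LinearMap.mul' k R ∘ₗ TensorProduct.map (chiDual St g) Sa)
      = E ∘ₗ (TensorProduct.assoc k R R R).toLinearMap ∘ₗ (Δ.rTensor R) := by
    apply TensorProduct.ext'
    intro x y
    have key : ∀ t : R ⊗[k] R,
        LinearMap.mul' k R (g.rTensor R t) * Sa y
          = E ((TensorProduct.assoc k R R R) (t ⊗ₜ[k] y)) := by
      intro t
      induction t using TensorProduct.induction_on with
      | zero => simp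
      | tmul a b => simp [hE, hm2, mul_assoc]
      | add u v hu hv =>
          rw [map_add, map_add, add_mul, hu, hv, TensorProduct.add_tmul, map_add, map_add]
    simp only [LinearMap.comp_apply, LinearEquiv.coe_coe, LinearMap.rTensor_tmul,
      TensorProduct.map_tmul, LinearMap.mul'_apply]
    rw [show chiDual St g x = LinearMap.mul' k R (g.rTensor R (Δ x)) from rfl]
    exact key (Δ x)
  have h2 : E ∘ₗ (Δ.lTensor R)
      = g ∘ₗ (TensorProduct.rid k R).toLinearMap ∘ₗ (St.RB.counit.lTensor R) := by
    apply TensorProduct.ext'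
    intro x y
    simp only [LinearMap.comp_apply, LinearMap.lTensor_tmul, LinearEquiv.coe_coe, hE,
      TensorProduct.map_tmul, LinearMap.mul'_apply, TensorProduct.rid_tmul]
    have : m2 (Δ y) = St.RB.counit y • 1 := conv_anti St y
    rw [this, map_smul, mul_smul_comm, mul_one]
  have e1 := DFunLike.congr_fun h1 (Δ r)
  have e2 := DFunLike.congr_fun h2 (Δ r)
  simp only [LinearMap.comp_apply, LinearEquiv.coe_coe] at e1 e2
  rw [e1, St.RB.coassoc r, e2, St.RB.comul_counit r]

lemma nuMap_tmul (St : Setup k J K R S) (r : R) (f : ↥(gdual St.DJ St.RB)) (r' : R) :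
    nuMap St (r ⊗ₜ[k] f) r' = (f : Module.Dual k R) r' • r := by
  simp [nuMap]

lemma nuMap_sum_apply (St : Setup k J K R S) {ι : Type} (ℬ : Module.Basis ι k R)
    (c : ι →₀ ↥(gdual St.DJ St.RB)) (r' : R) :
    nuMap St (c.sum fun i f => ℬ i ⊗ₜ[k] f) r'
      = Finsupp.linearCombination k ℬ
          (c.mapRange (fun (f : ↥(gdual St.DJ St.RB)) => (f : Module.Dual k R) r')
            (by simp)) := by
  classical
  rw [Finsupp.linearCombination_apply, Finsupp.sum_mapRange_index (by simp)]
  rw [map_finsuppSum, Finsupp.sum, Finsupp.sum, LinearMap.coe_sum, Finset.sum_apply]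
  exact Finset.sum_congr rfl fun j _ => nuMap_tmul St (ℬ j) (c j) r'

lemma nuMap_inj (St : Setup k J K R S) : Function.Injective (nuMap St) := by
  classical
  intro x y hxy
  let ℬ := Module.Basis.ofVectorSpace k R
  obtain ⟨c, hc⟩ := TensorProduct.eq_repr_basis_left ℬ x
  obtain ⟨d, hd⟩ := TensorProduct.eq_repr_basis_left ℬ y
  have hcd : c = d := by
    refine Finsupp.ext fun i => Subtype.ext (LinearMap.ext fun r' => ?_)
    have h1 : nuMap St x r' = nuMap St y r' := by rw [hxy]
    rw [← hc, ← hd, nuMap_sum_apply, nuMap_sum_apply] at h1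
    have h2 := congrArg ℬ.repr h1
    rw [Module.Basis.repr_linearCombination, Module.Basis.repr_linearCombination] at h2
    have h3 := DFunLike.congr_fun h2 i
    simpa using h3
  rw [← hc, ← hd, hcd]

theorem statement14 (St : Setup k J K R S)
    (hV : FiniteDimensional k ↥(St.RB.grade 1))
    (hW : FiniteDimensional k ↥(St.SB.grade 1))
    -- τ_{RS}^r : S → R^g lands in the graded dual (by Corollary 2.4 (2))
    (hfl : ∀ s : S, St.tauRS.flip s ∈ gdual St.DJ St.RB) :
    -- (1)  μ = χ^∨ ∘ ν : R ⊗ R^g → End(R) is the linear injection given by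
    --      μ(r ⊗ f)(r') = r ⟨f, r'₍₁₎⟩ r'₍₂₎
    (Function.Injective (fun x : R ⊗[k] ↥(gdual St.DJ St.RB) => chiDual St (nuMap St x)) ∧
     (∀ (r : R) (f : ↥(gdual St.DJ St.RB)) (r' : R) (p : ℕ) (r1 r2 : Fin p → R),
       St.RB.comul r' = ∑ i, r1 i ⊗ₜ[k] r2 i →
       chiDual St (nuMap St (r ⊗ₜ[k] f)) r'
         = ∑ i, (f : Module.Dual k R) (r1 i) • (r * r2 i))) ∧
    -- (2)  the composite ℬ = R ⊗ S --(id ⊗ τ_{RS}^r)--> R ⊗ R^g --μ--> End(R)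
    --      coincides with ρ
    (∀ (r : R) (s : S) (r' : R),
      chiDual St (nuMap St (r ⊗ₜ[k] (⟨St.tauRS.flip s, hfl s⟩ : ↥(gdual St.DJ St.RB)))) r'
        = r * St.sAct s r') := by
  refine ⟨⟨?_, ?_⟩, ?_⟩
  · -- injectivity of μ = χ^∨ ∘ ν
    intro x y hxy
    simp only at hxy
    apply nuMap_inj St
    apply LinearMap.ext
    intro r
    rw [← retraction St (nuMap St x) r, ← retraction St (nuMap St y) r, hxy]
  · -- explicit formula for μ
    intro r f r' p r1 r2 hΔ
    rw [show chiDual St (nuMap St (r ⊗ₜ[k] f)) r'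
        = LinearMap.mul' k R ((nuMap St (r ⊗ₜ[k] f)).rTensor R (St.RB.comul r')) from rfl]
    rw [hΔ, map_sum, map_sum]
    refine Finset.sum_congr rfl fun i _ => ?_
    rw [LinearMap.rTensor_tmul, nuMap_tmul, LinearMap.mul'_apply, smul_mul_assoc]
  · -- the composite coincides with ρ
    intro r s r'
    have key : ∀ t : R ⊗[k] R,
        LinearMap.mul' k R
            ((nuMap St (r ⊗ₜ[k] (⟨St.tauRS.flip s, hfl s⟩ : ↥(gdual St.DJ St.RB)))).rTensor R t)
          = r * (TensorProduct.lid k R) ((LinearMap.rTensor R (St.tauRS.flip s)) t) := by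
      intro t
      induction t using TensorProduct.induction_on with
      | zero => simp
      | tmul a b =>
          rw [LinearMap.rTensor_tmul, nuMap_tmul, LinearMap.mul'_apply,
            LinearMap.rTensor_tmul, TensorProduct.lid_tmul, smul_mul_assoc, mul_smul_comm]
      | add u v hu hv => rw [map_add, map_add, map_add, map_add, hu, hv, mul_add]
    rw [show chiDual St (nuMap St (r ⊗ₜ[k] (⟨St.tauRS.flip s, hfl s⟩ : ↥(gdual St.DJ St.RB)))) r'
        = LinearMap.mul' k R
            ((nuMap St (r ⊗ₜ[k] (⟨St.tauRS.flip s, hfl s⟩ : ↥(gdual St.DJ St.RB)))).rTensor R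
              (St.RB.comul r')) from rfl]
    rw [show St.sAct s r'
        = (TensorProduct.lid k R) ((LinearMap.rTensor R (St.tauRS.flip s)) (St.RB.comul r'))
        from rfl]
    exact key (St.RB.comul r')

end QB
end
end
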